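/- arXiv:0807.2987 — 3 statements merged into one kernel-verified Lean document; each statement's English description precedes it below -/
import Mathlib

section
/- For every configuration ω ∈ Ω and every site z ∈ ℤ₊², the set Γ_z of up-right paths from (0,0) to z contains a unique ω-optimal path that is below every ω-optimal path of Γ_z (the low-optimal path, denoted γ_z^ω). -/
open scoped NNReal

/-- A site of the lattice `ℤ²`. -/
abbrev Site : Type := ℤ × ℤ

/-- The positive quadrant `ℤ₊²`. -/
def posQuad : Set Site := {z : Site | 0 ≤ z.1 ∧ 0 ≤ z.2}

/-- An admissible (up-right) step. -/
def IsStep (u v : Site) : Prop := v = u + (1, 0) ∨ v = u + (0, 1)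

/-- `γ` is an up-right path from `(0,0)` to `z`, i.e. `γ ∈ Γ_z`. -/
def IsPathTo (z : Site) (γ : List Site) : Prop :=
  γ.head? = some ((0, 0) : Site) ∧ γ.getLast? = some z ∧ γ.Chain' IsStep

/-- The length `ω(γ) = Σ_{z ∈ γ} ω(z)` of a path `γ` under the configuration `ω`. -/
noncomputable def plen (ω : Site → ℝ) (γ : List Site) : ℝ := (γ.map ω).sum

/-- `γ ∈ Γ_z` is `ω`-optimal if its length is maximal over `Γ_z`. -/
def IsOptimal (ω : Site → ℝ) (z : Site) (γ : List Site) : Prop :=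
  IsPathTo z γ ∧ ∀ γ' : List Site, IsPathTo z γ' → plen ω γ' ≤ plen ω γ

/-- `γ` is below `γ'`: at every step index, the second coordinate of the site of `γ`
is at most that of the corresponding site of `γ'`. -/
def Below (γ γ' : List Site) : Prop :=
  ∀ (i : ℕ) (h : i < γ.length) (h' : i < γ'.length),
    (γ.get ⟨i, h⟩).2 ≤ (γ'.get ⟨i, h'⟩).2

/-- `γ` is the low-optimal path of `Γ_z`: it is `ω`-optimal and below every
`ω`-optimal path of `Γ_z`. -/
def IsLowOptimal (ω : Site → ℝ) (z : Site) (γ : List Site) : Prop :=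
  IsOptimal ω z γ ∧ ∀ γ' : List Site, IsOptimal ω z γ' → Below γ γ'

open Classical in
/-- The low-optimal path `γ_z^ω` (an arbitrary default when it does not exist). -/
noncomputable def lowOpt (ω : Site → ℝ) (z : Site) : List Site :=
  if h : ∃ γ : List Site, IsLowOptimal ω z γ then h.choose else []

/-- The vertex set `V(T_z^ω) = {z' ∈ ℤ₊² : z ∈ γ_{z'}^ω}` of the subtree rooted at `z`. -/
def treeV (ω : Site → ℝ) (z : Site) : Set Site :=
  {z' : Site | z' ∈ posQuad ∧ z ∈ lowOpt ω z'}

/-! ### Auxiliary material -/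

/-- The `i`-th site of a path, with junk value `(0,0)` out of range. -/
def site (γ : List Site) (i : ℕ) : Site := γ.getD i ((0, 0) : Site)

lemma site_eq_get (γ : List Site) (i : ℕ) (h : i < γ.length) :
    site γ i = γ.get ⟨i, h⟩ := by
  rw [site, List.getD_eq_getElem _ _ h, List.get_eq_getElem]

lemma isStep_iff {u v : Site} :
    IsStep u v ↔ (v.1 = u.1 + 1 ∧ v.2 = u.2) ∨ (v.1 = u.1 ∧ v.2 = u.2 + 1) := by
  simp only [IsStep, Prod.ext_iff, Prod.fst_add, Prod.snd_add]
  constructor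
  · rintro (⟨h1, h2⟩ | ⟨h1, h2⟩) <;> simp_all
  · rintro (⟨h1, h2⟩ | ⟨h1, h2⟩) <;> simp_all

lemma path_ne_nil {z : Site} {γ : List Site} (h : IsPathTo z γ) : γ ≠ [] := by
  intro e; rw [e] at h; simp [IsPathTo] at h

lemma path_len_pos {z : Site} {γ : List Site} (h : IsPathTo z γ) : 0 < γ.length :=
  List.length_pos_iff.2 (path_ne_nil h)

lemma path_site_zero {z : Site} {γ : List Site} (h : IsPathTo z γ) :
    site γ 0 = (0, 0) := by
  cases γ with
  | nil => exact absurd rfl (path_ne_nil h)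
  | cons a t =>
    have := h.1
    simp only [List.head?_cons, Option.some.injEq] at this
    simp [site, this]

lemma path_site_last {z : Site} {γ : List Site} (h : IsPathTo z γ) :
    site γ (γ.length - 1) = z := by
  have hne := path_ne_nil h
  have := h.2.1
  rw [List.getLast?_eq_getLast_of_ne_nil hne] at this
  have h2 : γ.getLast hne = z := Option.some_injective _ this
  rw [List.getLast_eq_getElem] at h2
  rw [site, List.getD_eq_getElem _ _ (show γ.length - 1 < γ.length by
    have := path_len_pos h; omega)]
  exact h2

lemma path_step {z : Site} {γ : List Site} (h : IsPathTo z γ) {i : ℕ}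
    (hi : i + 1 < γ.length) : IsStep (site γ i) (site γ (i + 1)) := by
  have := List.isChain_iff_getElem.1 h.2.2 i (by omega)
  rw [site_eq_get γ i (by omega), site_eq_get γ (i+1) hi]
  exact this

lemma path_site_sum {z : Site} {γ : List Site} (h : IsPathTo z γ) :
    ∀ i, i < γ.length → (site γ i).1 + (site γ i).2 = i := by
  intro i
  induction i with
  | zero => intro _; rw [path_site_zero h]; simp
  | succ n ih =>
    intro hi
    have h1 := ih (by omega)
    have h2 := isStep_iff.1 (path_step h hi)
    push_cast
    omega

lemma path_length {z : Site} {γ : List Site} (h : IsPathTo z γ) :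
    (γ.length : ℤ) = z.1 + z.2 + 1 := by
  have hl := path_len_pos h
  have h1 := path_site_sum h (γ.length - 1) (by omega)
  rw [path_site_last h] at h1
  omega

lemma path_mono {z : Site} {γ : List Site} (h : IsPathTo z γ) (f : Site → ℤ)
    (hf : ∀ u v : Site, IsStep u v → f u ≤ f v) :
    ∀ j, j < γ.length → ∀ i, i ≤ j → f (site γ i) ≤ f (site γ j) := by
  intro j
  induction j with
  | zero =>
    intro _ i hij
    obtain rfl : i = 0 := by omega
    exact le_refl _
  | succ n ih =>
    intro hj i hij
    rcases Nat.eq_or_lt_of_le hij with rfl | hi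
    · exact le_refl _
    · exact le_trans (ih (by omega) i (by omega)) (hf _ _ (path_step h hj))

lemma path_mem_box {z : Site} {γ : List Site} (h : IsPathTo z γ) {u : Site}
    (hu : u ∈ γ) : u ∈ Set.Icc ((0, 0) : Site) z := by
  obtain ⟨⟨i, hi⟩, rfl⟩ := List.mem_iff_get.1 hu
  rw [← site_eq_get γ i hi]
  have hl := path_len_pos h
  have hfst : ∀ u v : Site, IsStep u v → u.1 ≤ v.1 := by
    intro u v hs; have := isStep_iff.1 hs; omega
  have hsnd : ∀ u v : Site, IsStep u v → u.2 ≤ v.2 := by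
    intro u v hs; have := isStep_iff.1 hs; omega
  have h1 := path_mono h Prod.fst hfst i hi 0 (Nat.zero_le _)
  have h2 := path_mono h Prod.fst hfst (γ.length - 1) (by omega) i (by omega)
  have h3 := path_mono h Prod.snd hsnd i hi 0 (Nat.zero_le _)
  have h4 := path_mono h Prod.snd hsnd (γ.length - 1) (by omega) i (by omega)
  rw [path_site_zero h] at h1 h3
  rw [path_site_last h] at h2 h4
  constructor <;> constructor <;> simp_all [Prod.le_def]

lemma paths_finite (z : Site) : {γ : List Site | IsPathTo z γ}.Finite := by
  classical
  have hbox : (Set.Icc ((0, 0) : Site) z).Finite := Set.finite_Icc _ _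
  have : Finite (Set.Icc ((0, 0) : Site) z) := hbox.to_subtype
  have hfin : {l : List (Set.Icc ((0, 0) : Site) z) |
      l.length ≤ (z.1 + z.2 + 1).toNat}.Finite := List.finite_length_le _ _
  apply (hfin.image (fun l => l.map Subtype.val)).subset
  intro γ hγ
  have hγ' : IsPathTo z γ := hγ
  refine ⟨γ.attach.map (fun x => ⟨x.1, path_mem_box hγ' x.2⟩), ?_, ?_⟩
  · have := path_length hγ'
    simp only [Set.mem_setOf_eq, List.length_map, List.length_attach]
    omega
  · apply List.ext_getElem (by simp)
    intro i h1 h2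
    simp

lemma exists_path : ∀ n : ℕ, ∀ z : Site, z ∈ posQuad → z.1 + z.2 = n →
    ∃ γ : List Site, IsPathTo z γ := by
  intro n
  induction n with
  | zero =>
    intro z hz hsum
    obtain ⟨h1, h2⟩ := hz
    obtain rfl : z = (0, 0) := by
      ext <;> simp <;> omega
    exact ⟨[((0, 0) : Site)], by simp [IsPathTo]; exact List.isChain_singleton _⟩
  | succ n ih =>
    intro z hz hsum
    obtain ⟨h1, h2⟩ := hz
    have step : ∀ w : Site, IsStep w z → w ∈ posQuad → w.1 + w.2 = n →
        ∃ γ : List Site, IsPathTo z γ := by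
      intro w hs hw hwsum
      obtain ⟨γ, hγ⟩ := ih w hw hwsum
      refine ⟨γ ++ [z], ?_, ?_, ?_⟩
      · rw [List.head?_append_of_ne_nil _ (path_ne_nil hγ)]
        exact hγ.1
      · simp [List.getLast?_concat]
      · apply List.isChain_append.2
        refine ⟨hγ.2.2, List.isChain_singleton z, ?_⟩
        intro x hx y hy
        rw [hγ.2.1] at hx
        simp only [Option.mem_def, List.head?_cons, Option.some.injEq] at hx hy
        rw [← hx, ← hy]
        exact hs
    rcases lt_or_ge 0 z.1 with hpos | hnp
    · refine step (z.1 - 1, z.2) ?_ ⟨by omega, h2⟩ (by omega)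
      rw [isStep_iff]
      exact Or.inl ⟨show z.1 = z.1 - 1 + 1 by omega, rfl⟩
    · have hz2 : 0 < z.2 := by omega
      refine step (z.1, z.2 - 1) ?_ ⟨h1, by omega⟩ (by omega)
      rw [isStep_iff]
      exact Or.inr ⟨rfl, show z.2 = z.2 - 1 + 1 by omega⟩

/-- The meet (pointwise lower envelope) of two paths. -/
def meetL (γ γ' : List Site) : List Site :=
  List.zipWith (fun u v => if u.2 ≤ v.2 then u else v) γ γ'

/-- The join (pointwise upper envelope) of two paths. -/
def joinL (γ γ' : List Site) : List Site :=
  List.zipWith (fun u v => if u.2 ≤ v.2 then v else u) γ γ'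

lemma length_meetL (γ γ' : List Site) :
    (meetL γ γ').length = min γ.length γ'.length := List.length_zipWith

lemma length_joinL (γ γ' : List Site) :
    (joinL γ γ').length = min γ.length γ'.length := List.length_zipWith

lemma site_meetL (γ γ' : List Site) (i : ℕ) (h : i < γ.length) (h' : i < γ'.length) :
    site (meetL γ γ') i =
      if (site γ i).2 ≤ (site γ' i).2 then site γ i else site γ' i := by
  rw [site_eq_get _ i (by rw [length_meetL]; omega), site_eq_get γ i h,
    site_eq_get γ' i h']
  simp [meetL, List.get_eq_getElem, List.getElem_zipWith]

lemma site_joinL (γ γ' : List Site) (i : ℕ) (h : i < γ.length) (h' : i < γ'.length) :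
    site (joinL γ γ') i =
      if (site γ i).2 ≤ (site γ' i).2 then site γ' i else site γ i := by
  rw [site_eq_get _ i (by rw [length_joinL]; omega), site_eq_get γ i h,
    site_eq_get γ' i h']
  simp [joinL, List.get_eq_getElem, List.getElem_zipWith]

lemma plen_meet_join (ω : Site → ℝ) :
    ∀ γ γ' : List Site, γ.length = γ'.length →
      plen ω (meetL γ γ') + plen ω (joinL γ γ') = plen ω γ + plen ω γ' := by
  intro γ
  induction γ with
  | nil =>
    intro γ' h
    obtain rfl : γ' = [] := by
      cases γ' <;> simp_all
    simp [meetL, joinL, plen]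
  | cons a l ih =>
    intro γ' h
    cases γ' with
    | nil => simp at h
    | cons b m =>
      have hlm : l.length = m.length := by simpa using h
      have := ih m hlm
      simp only [meetL, joinL, plen] at this
      by_cases hab : a.2 ≤ b.2
      · simp only [meetL, joinL, plen, List.zipWith_cons_cons, List.map_cons,
          List.sum_cons, if_pos hab]
        linarith
      · simp only [meetL, joinL, plen, List.zipWith_cons_cons, List.map_cons,
          List.sum_cons, if_neg hab]
        linarith

lemma meet_join_isPath {z : Site} {γ γ' : List Site} (h : IsPathTo z γ)
    (h' : IsPathTo z γ') : IsPathTo z (meetL γ γ') ∧ IsPathTo z (joinL γ γ') := by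
  have hlen : γ.length = γ'.length := by
    have := path_length h; have := path_length h'; omega
  have hpos := path_len_pos h
  have hm : (meetL γ γ').length = γ.length := by rw [length_meetL]; omega
  have hj : (joinL γ γ').length = γ.length := by rw [length_joinL]; omega
  -- the head and last of meet/join
  have hsite0 : site (meetL γ γ') 0 = (0, 0) ∧ site (joinL γ γ') 0 = (0, 0) := by
    rw [site_meetL γ γ' 0 hpos (by omega), site_joinL γ γ' 0 hpos (by omega),
      path_site_zero h, path_site_zero h']
    simp
  have hsitel : site (meetL γ γ') (γ.length - 1) = z ∧
      site (joinL γ γ') (γ.length - 1) = z := by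
    rw [site_meetL γ γ' _ (by omega) (by omega), site_joinL γ γ' _ (by omega) (by omega),
      path_site_last h]
    have h2 := path_site_last h'
    rw [← hlen] at h2
    rw [h2]
    simp
  have hne : meetL γ γ' ≠ [] := by
    intro e; rw [← List.length_eq_zero_iff] at e; omega
  have hne' : joinL γ γ' ≠ [] := by
    intro e; rw [← List.length_eq_zero_iff] at e; omega
  -- steps
  have hstep : ∀ i, i + 1 < γ.length →
      IsStep (site (meetL γ γ') i) (site (meetL γ γ') (i + 1)) ∧
      IsStep (site (joinL γ γ') i) (site (joinL γ γ') (i + 1)) := by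
    intro i hi
    have s1 := isStep_iff.1 (path_step h hi)
    have s2 := isStep_iff.1 (path_step h' (show i + 1 < γ'.length by omega))
    have q1 := path_site_sum h i (by omega)
    have q2 := path_site_sum h (i + 1) hi
    have q3 := path_site_sum h' i (by omega)
    have q4 := path_site_sum h' (i + 1) (by omega)
    rw [site_meetL γ γ' i (by omega) (by omega),
      site_meetL γ γ' (i + 1) (by omega) (by omega),
      site_joinL γ γ' i (by omega) (by omega),
      site_joinL γ γ' (i + 1) (by omega) (by omega)]
    constructor <;> rw [isStep_iff] <;> split_ifs <;> omega
  have hchain : ∀ δ : List Site, δ.length = γ.length →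
      (∀ i, i + 1 < γ.length → IsStep (site δ i) (site δ (i + 1))) →
      δ.Chain' IsStep := by
    intro δ hδ hst
    refine List.isChain_iff_getElem.2 ?_
    intro i hilt
    rw [hδ] at hilt
    have h2 := hst i (by omega)
    rw [site_eq_get δ i (by omega), site_eq_get δ (i + 1) (by omega)] at h2
    exact h2
  have hhead : ∀ δ : List Site, (hδ : δ ≠ []) → site δ 0 = (0, 0) →
      δ.head? = some ((0, 0) : Site) := by
    intro δ hδ h0
    cases δ with
    | nil => exact absurd rfl hδ
    | cons a t =>
      simp only [site, List.getD_cons_zero] at h0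
      simp [h0]
  have hlast : ∀ δ : List Site, (hδ : δ ≠ []) → site δ (δ.length - 1) = z →
      δ.getLast? = some z := by
    intro δ hδ h0
    rw [List.getLast?_eq_getLast_of_ne_nil hδ]
    rw [site, List.getD_eq_getElem _ _ (show δ.length - 1 < δ.length by
      have := List.length_pos_iff.2 hδ; omega)] at h0
    rw [List.getLast_eq_getElem]
    exact congrArg some h0
  refine ⟨⟨hhead _ hne hsite0.1, hlast _ hne (by rw [hm]; exact hsitel.1), ?_⟩,
    ⟨hhead _ hne' hsite0.2, hlast _ hne' (by rw [hj]; exact hsitel.2), ?_⟩⟩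
  · exact hchain _ hm (fun i hi => (hstep i hi).1)
  · exact hchain _ hj (fun i hi => (hstep i hi).2)

/-- The total displacement functional used to pick the lowest optimal path. -/
def F (γ : List Site) : ℤ := ((γ.map Prod.snd).sum : ℤ)

lemma F_eq (γ : List Site) : F γ = ∑ i ∈ Finset.range γ.length, (site γ i).2 := by
  induction γ with
  | nil => simp [F]
  | cons a l ih =>
    rw [List.length_cons, Finset.sum_range_succ']
    simp only [site, List.getD_cons_succ, List.getD_cons_zero]
    simp only [F, List.map_cons, List.sum_cons]
    simp only [F, site] at ih
    omega

/-- Each `Γ_z`, `z ∈ ℤ₊²`, contains a unique `ω`-optimal path below every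
`ω`-optimal path of `Γ_z`. -/
theorem low_optimal_exists_unique (ω : Site → ℝ) (hω : ∀ z : Site, 0 ≤ ω z)
    (z : Site) (hz : z ∈ posQuad) :
    ∃! γ : List Site, IsLowOptimal ω z γ := by
  classical
  have hfin := paths_finite z
  obtain ⟨γ₁, hγ₁⟩ := exists_path (z.1 + z.2).toNat z hz (by
    obtain ⟨h1, h2⟩ := hz; omega)
  -- an optimal path exists
  obtain ⟨γmax, hγmax, hmax⟩ :=
    Set.exists_max_image {γ : List Site | IsPathTo z γ} (plen ω) hfin ⟨γ₁, hγ₁⟩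
  have hOne : (Set.Nonempty {γ : List Site | IsOptimal ω z γ}) :=
    ⟨γmax, hγmax, fun γ' hγ' => hmax γ' hγ'⟩
  have hOfin : {γ : List Site | IsOptimal ω z γ}.Finite :=
    hfin.subset (fun γ hγ => hγ.1)
  -- pick the optimal path minimizing F
  obtain ⟨γ₀, hγ₀, hγ₀min⟩ :=
    Set.exists_min_image {γ : List Site | IsOptimal ω z γ} F hOfin hOne
  have hγ₀opt : IsOptimal ω z γ₀ := hγ₀
  -- the meet of two optimal paths is optimal
  have meet_opt : ∀ γ' : List Site, IsOptimal ω z γ' →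
      IsOptimal ω z (meetL γ₀ γ') := by
    intro γ' hopt'
    have hp := hγ₀opt.1
    have hp' := hopt'.1
    have hlen : γ₀.length = γ'.length := by
      have := path_length hp; have := path_length hp'; omega
    obtain ⟨hmp, hjp⟩ := meet_join_isPath hp hp'
    have hsum := plen_meet_join ω γ₀ γ' hlen
    have h1 : plen ω (joinL γ₀ γ') ≤ plen ω γ₀ := hγ₀opt.2 _ hjp
    have h2 : plen ω γ₀ ≤ plen ω γ' := hopt'.2 _ hp
    have h3 : plen ω γ' ≤ plen ω γ₀ := hγ₀opt.2 _ hp'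
    refine ⟨hmp, fun γ'' hγ'' => ?_⟩
    have := hγ₀opt.2 _ hγ''
    linarith
  -- γ₀ is below every optimal path
  have hbelow : ∀ γ' : List Site, IsOptimal ω z γ' → Below γ₀ γ' := by
    intro γ' hopt'
    by_contra hnb
    have hp := hγ₀opt.1
    have hp' := hopt'.1
    have hlen : γ₀.length = γ'.length := by
      have := path_length hp; have := path_length hp'; omega
    unfold Below at hnb
    push_neg at hnb
    obtain ⟨i, h1, h2, hlt⟩ := hnb
    have hmO : IsOptimal ω z (meetL γ₀ γ') := meet_opt γ' hopt'
    have hF : F (meetL γ₀ γ') < F γ₀ := by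
      rw [F_eq, F_eq, length_meetL, ← hlen, min_self]
      apply Finset.sum_lt_sum
      · intro j hj
        rw [Finset.mem_range] at hj
        rw [site_meetL γ₀ γ' j hj (by omega)]
        split_ifs with hc
        · exact le_refl _
        · exact le_of_not_ge hc
      · refine ⟨i, Finset.mem_range.2 h1, ?_⟩
        rw [site_meetL γ₀ γ' i h1 h2, site_eq_get γ₀ i h1, site_eq_get γ' i h2]
        split_ifs with hc <;> omega
    exact absurd hF (not_lt.2 (hγ₀min _ hmO))
  refine ⟨γ₀, ⟨hγ₀opt, hbelow⟩, ?_⟩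
  -- uniqueness
  intro γ' hγ'
  have hp := hγ₀opt.1
  have hp' := hγ'.1.1
  have hlen : γ'.length = γ₀.length := by
    have := path_length hp; have := path_length hp'; omega
  have hb1 : Below γ' γ₀ := hγ'.2 γ₀ hγ₀opt
  have hb2 : Below γ₀ γ' := hbelow γ' hγ'.1
  apply List.ext_get hlen
  intro i h1 h2
  have hy : (γ'.get ⟨i, h1⟩).2 = (γ₀.get ⟨i, h2⟩).2 :=
    le_antisymm (hb1 i h1 h2) (hb2 i h2 h1)
  have hx1 := path_site_sum hp' i h1
  have hx2 := path_site_sum hp i h2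
  rw [site_eq_get γ' i h1] at hx1
  rw [site_eq_get γ₀ i h2] at hx2
  ext
  · omega
  · exact hy
end

section
/- For every configuration ω ∈ Ω, every site z ∈ ℤ₊² and every site z' lying on the low-optimal path γ_z^ω, the initial segment of γ_z^ω from (0,0) to z' is equal to the low-optimal path γ_{z'}^ω. -/
open scoped NNReal

lemma plen_append (ω : Site → ℝ) (l₁ l₂ : List Site) :
    plen ω (l₁ ++ l₂) = plen ω l₁ + plen ω l₂ := by
  simp [plen]

lemma sum_coords {z : Site} {γ : List Site} (h : IsPathTo z γ) :
    ∀ i (hi : i < γ.length), (γ.get ⟨i, hi⟩).1 + (γ.get ⟨i, hi⟩).2 = (i : ℤ) := by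
  intro i
  induction i with
  | zero =>
    intro hi
    cases γ with
    | nil => simp at hi
    | cons a l =>
      have h1 := h.1
      simp only [List.head?_cons, Option.some.injEq] at h1
      simp [h1]
  | succ n ih =>
    intro hi
    have hn : n < γ.length := by omega
    have hstep : IsStep (γ.get ⟨n, hn⟩) (γ.get ⟨n + 1, hi⟩) :=
      List.isChain_iff_getElem.mp h.2.2 n (by omega)
    have hs := ih hn
    simp only [List.get_eq_getElem] at hstep hs ⊢
    rcases hstep with h' | h' <;> rw [h'] <;>
      simp [Prod.fst_add, Prod.snd_add] <;> push_cast <;> omega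

lemma getLast_get {z : Site} {γ : List Site} (h : IsPathTo z γ)
    (hl : γ.length - 1 < γ.length) : γ.get ⟨γ.length - 1, hl⟩ = z := by
  have h2 := h.2.1
  have hne : γ ≠ [] := by rintro rfl; simp at h2
  rw [List.getLast?_eq_getLast hne] at h2
  rw [List.get_eq_getElem, ← List.getLast_eq_getElem hne]
  exact Option.some_injective _ h2

lemma length_unique {z : Site} {γ₁ γ₂ : List Site}
    (h₁ : IsPathTo z γ₁) (h₂ : IsPathTo z γ₂) : γ₁.length = γ₂.length := by
  have hne₁ : γ₁ ≠ [] := by have := h₁.1; rintro rfl; simp at this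
  have hne₂ : γ₂ ≠ [] := by have := h₂.1; rintro rfl; simp at this
  have hl₁ : γ₁.length - 1 < γ₁.length := by
    have := List.length_pos_iff.mpr hne₁; omega
  have hl₂ : γ₂.length - 1 < γ₂.length := by
    have := List.length_pos_iff.mpr hne₂; omega
  have e₁ := sum_coords h₁ _ hl₁
  have e₂ := sum_coords h₂ _ hl₂
  rw [getLast_get h₁] at e₁
  rw [getLast_get h₂] at e₂
  have : ((γ₁.length - 1 : ℕ) : ℤ) = ((γ₂.length - 1 : ℕ) : ℤ) := by omega
  have hp₁ := List.length_pos_iff.mpr hne₁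
  have hp₂ := List.length_pos_iff.mpr hne₂
  omega

lemma lowOpt_unique {ω : Site → ℝ} {z : Site} {γ₁ γ₂ : List Site}
    (h₁ : IsLowOptimal ω z γ₁) (h₂ : IsLowOptimal ω z γ₂) : γ₁ = γ₂ := by
  have hb₁ := h₁.2 γ₂ h₂.1
  have hb₂ := h₂.2 γ₁ h₁.1
  have hlen : γ₁.length = γ₂.length := length_unique h₁.1.1 h₂.1.1
  apply List.ext_get hlen
  intro i hi hi'
  have e2 : (γ₁.get ⟨i, hi⟩).2 = (γ₂.get ⟨i, hi'⟩).2 :=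
    le_antisymm (hb₁ i hi hi') (hb₂ i hi' hi)
  have s1 := sum_coords h₁.1.1 i hi
  have s2 := sum_coords h₂.1.1 i hi'
  have e1 : (γ₁.get ⟨i, hi⟩).1 = (γ₂.get ⟨i, hi'⟩).1 := by omega
  exact Prod.ext e1 e2

lemma lowOpt_eq {ω : Site → ℝ} {z : Site} {γ : List Site}
    (h : IsLowOptimal ω z γ) : lowOpt ω z = γ := by
  rw [lowOpt, dif_pos ⟨γ, h⟩]
  exact lowOpt_unique (Exists.choose_spec (⟨γ, h⟩ : ∃ γ, IsLowOptimal ω z γ)) h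

lemma isPathTo_take {z : Site} {γ : List Site} (h : IsPathTo z γ)
    {i : ℕ} (hi : i < γ.length) : IsPathTo (γ.get ⟨i, hi⟩) (γ.take (i + 1)) := by
  refine ⟨?_, ?_, h.2.2.take _⟩
  · rw [List.head?_take]
    have h1 := h.1
    simpa using h1
  · have hlen : (γ.take (i + 1)).length = i + 1 := by
      rw [List.length_take]; omega
    have hne : γ.take (i + 1) ≠ [] := by
      intro hc; rw [hc] at hlen; simp at hlen
    rw [List.getLast?_eq_getLast hne, List.getLast_eq_getElem]
    simp [List.getElem_take, hlen]

lemma isPathTo_append {z z' : Site} {γ δ : List Site} (h : IsPathTo z γ)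
    {i : ℕ} (hi : i < γ.length) (hz' : γ.get ⟨i, hi⟩ = z')
    (hδ : IsPathTo z' δ) : IsPathTo z (δ ++ γ.drop (i + 1)) := by
  have hneδ : δ ≠ [] := by have := hδ.1; rintro rfl; simp at this
  by_cases hlast : i + 1 = γ.length
  · have hdrop : γ.drop (i + 1) = [] := by
      apply List.drop_eq_nil_of_le; omega
    rw [hdrop, List.append_nil]
    have : z' = z := by
      rw [← hz']
      have hl : γ.length - 1 < γ.length := by omega
      have := getLast_get h hl
      rw [← this]; congr 1; simp [Fin.ext_iff]; omega
    rw [← this]; exact hδ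
  · have hd : i + 1 < γ.length := by omega
    have hdne : γ.drop (i + 1) ≠ [] := by
      intro hc
      have := List.length_drop (i := i + 1) (l := γ)
      rw [hc] at this; simp at this; omega
    refine ⟨?_, ?_, ?_⟩
    · rw [List.head?_append]
      have := hδ.1
      rw [this]; rfl
    · rw [List.getLast?_append, List.getLast?_drop, if_neg (by omega), h.2.1]
      rfl
    · rw [List.Chain', List.isChain_append]
      refine ⟨hδ.2.2, h.2.2.drop _, ?_⟩
      intro x hx y hy
      have hxz : x = z' := by
        rw [List.getLast?_eq_getLast hneδ, Option.mem_some_iff] at hx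
        rw [← hx, List.getLast_eq_getElem]
        exact getLast_get hδ (by have := List.length_pos_iff.mpr hneδ; omega)
      have hyg : y = γ.get ⟨i + 1, hd⟩ := by
        have : (γ.drop (i + 1)).head? = some (γ.get ⟨i + 1, hd⟩) := by
          rw [List.head?_eq_getElem?, List.getElem?_drop]
          simp [List.getElem?_eq_getElem hd]
        rw [this, Option.mem_some_iff] at hy
        exact hy.symm
      rw [hxz, hyg, ← hz']
      exact List.isChain_iff_getElem.mp h.2.2 i (by omega)

lemma plen_take_drop (ω : Site → ℝ) (γ : List Site) (n : ℕ) :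
    plen ω γ = plen ω (γ.take n) + plen ω (γ.drop n) := by
  conv_lhs => rw [← List.take_append_drop n γ]
  exact plen_append ω _ _

/-- If `z'` lies on the low-optimal path `γ_z^ω`, then the initial segment of
`γ_z^ω` from `(0,0)` to `z'` is the low-optimal path `γ_{z'}^ω`. -/
theorem lowOpt_initial_segment (ω : Site → ℝ) (hω : ∀ z : Site, 0 ≤ ω z)
    (z : Site) (hz : z ∈ posQuad) (z' : Site) (hz' : z' ∈ lowOpt ω z) :
    ∃ (i : ℕ) (hi : i < (lowOpt ω z).length),
      (lowOpt ω z).get ⟨i, hi⟩ = z' ∧ (lowOpt ω z).take (i + 1) = lowOpt ω z' := by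
  have hex : ∃ γ : List Site, IsLowOptimal ω z γ := by
    by_contra hne
    rw [lowOpt, dif_neg hne] at hz'
    simp at hz'
  have hγ : IsLowOptimal ω z (lowOpt ω z) := by
    rw [lowOpt, dif_pos hex]; exact hex.choose_spec
  set γ := lowOpt ω z with hγdef
  obtain ⟨⟨i, hi⟩, hiz⟩ := List.mem_iff_get.mp hz'
  refine ⟨i, hi, hiz, ?_⟩
  have hpre : IsPathTo z' (γ.take (i + 1)) := hiz ▸ isPathTo_take hγ.1.1 hi
  have hprelen : (γ.take (i + 1)).length = i + 1 := by
    rw [List.length_take]; omega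
  -- optimality of the prefix
  have hopt : IsOptimal ω z' (γ.take (i + 1)) := by
    refine ⟨hpre, ?_⟩
    intro δ hδ
    have hcat : IsPathTo z (δ ++ γ.drop (i + 1)) := isPathTo_append hγ.1.1 hi hiz hδ
    have hle := hγ.1.2 _ hcat
    rw [plen_append] at hle
    have := plen_take_drop ω γ (i + 1)
    linarith
  -- below every optimal path
  have hlow : IsLowOptimal ω z' (γ.take (i + 1)) := by
    refine ⟨hopt, ?_⟩
    intro δ hδ
    have hcat : IsPathTo z (δ ++ γ.drop (i + 1)) := isPathTo_append hγ.1.1 hi hiz hδ.1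
    have hδlen : δ.length = i + 1 := by
      have := length_unique hδ.1 hpre
      omega
    have hcatopt : IsOptimal ω z (δ ++ γ.drop (i + 1)) := by
      refine ⟨hcat, ?_⟩
      intro σ hσ
      have h1 := hγ.1.2 σ hσ
      have h2 := hδ.2 _ hpre
      have h3 := plen_take_drop ω γ (i + 1)
      rw [plen_append]
      linarith
    have hbelow := hγ.2 _ hcatopt
    intro j hj hj'
    have hjγ : j < γ.length := by
      rw [hprelen] at hj; omega
    have hjc : j < (δ ++ γ.drop (i + 1)).length := by
      rw [List.length_append, hδlen]
      omega
    have hb := hbelow j hjγ hjc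
    have e1 : (γ.take (i + 1)).get ⟨j, hj⟩ = γ.get ⟨j, hjγ⟩ := by
      simp
    have e2 : (δ ++ γ.drop (i + 1)).get ⟨j, hjc⟩ = δ.get ⟨j, hj'⟩ := by
      simp only [List.get_eq_getElem]; exact List.getElem_append_left hj'
    rw [e1, ← e2]
    exact hb
  exact (lowOpt_eq hlow).symm
end

section
/- Let μ be a Borel probability measure on [0,∞) and let ℙ be the product measure ⊗_{z∈ℤ²} μ on Ω. Let a ∈ ℤ₊² and let A ⊆ 𝕋 satisfy the growth property, with {ω : T_z^ω ∈ A} measurable for every z ∈ ℤ₊². Set Ω^a = {ω ∈ Ω : a belongs to both γ_{a+(1,0)}^ω and γ_{a+(0,1)}^ω} and assume ℙ(Ω^a) > 0. Then ℙ(T_{a+(1,1)} ∈ A | Ω^a) ≤ ℙ(T_{(1,1)} ∈ A). -/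
open scoped NNReal

/-- A (rooted) subtree of the last passage percolation tree, recorded by its root
and its vertex set. -/
structure LPPTree where
  root : Site
  verts : Set Site

/-- The subtree `T_z^ω` of the last passage percolation tree rooted at `z`. -/
def subtree (ω : Site → ℝ) (z : Site) : LPPTree := ⟨z, treeV ω z⟩

/-- The set `𝕋` of all subtrees `T_z^ω`, `z ∈ ℤ₊²`, `ω ∈ Ω`. -/
def TreeSet : Set LPPTree :=
  {T : LPPTree | ∃ (ω : Site → ℝ) (z : Site),
    (∀ s : Site, 0 ≤ ω s) ∧ z ∈ posQuad ∧ T = subtree ω z}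

/-- A set `A ⊆ 𝕋` satisfies the growth property if whenever `T ∈ A`, `T' ∈ 𝕋` and
`V(T) - r(T) ⊆ V(T') - r(T')`, then `T' ∈ A`. -/
def GrowthProperty (A : Set LPPTree) : Prop :=
  ∀ T ∈ A, ∀ T' ∈ TreeSet,
    (· - T.root) '' T.verts ⊆ (· - T'.root) '' T'.verts → T' ∈ A

/-- A point of the configuration space `Ω = [0,∞)^{ℤ²}`. -/
abbrev CfgNN : Type := Site → ℝ≥0

/-- The real-valued configuration associated to a point of `Ω`. -/
noncomputable def toCfg (ω : CfgNN) : Site → ℝ := fun z => (ω z : ℝ)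

/-- The translation operator `τ_a(ω) = ω(a + ·)` on `Ω`. -/
def shift (a : Site) (ω : CfgNN) : CfgNN := fun z => ω (a + z)

/-- The event `Ω^a = {ω ∈ Ω : a belongs to both γ_{a+(1,0)}^ω and γ_{a+(0,1)}^ω}`. -/
def OmegaSup (a : Site) : Set CfgNN :=
  {ω : CfgNN | a ∈ lowOpt (toCfg ω) (a + (1, 0)) ∧ a ∈ lowOpt (toCfg ω) (a + (0, 1))}

namespace LPPAux

lemma isStep_sum {u v : Site} (h : IsStep u v) : v.1 + v.2 = u.1 + u.2 + 1 := by
  rcases h with h | h <;> subst h <;> simp [Prod.fst_add, Prod.snd_add] <;> ring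

lemma isStep_le {u v : Site} (h : IsStep u v) : u.1 ≤ v.1 ∧ u.2 ≤ v.2 := by
  rcases h with h | h <;> subst h <;>
    exact ⟨by simp [Prod.fst_add], by simp [Prod.snd_add]⟩

lemma path_ne_nil {z γ} (h : IsPathTo z γ) : γ ≠ [] := by
  rintro rfl; simp [IsPathTo] at h

lemma path_get_zero {z γ} (h : IsPathTo z γ) (h0 : 0 < γ.length) :
    γ.get ⟨0, h0⟩ = ((0,0) : Site) := by
  have := h.1
  rw [List.head?_eq_head (path_ne_nil h)] at this
  have h2 := (Option.some.inj this)
  rw [List.head_eq_getElem] at h2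
  simpa [List.get_eq_getElem] using h2

lemma path_get_last {z γ} (h : IsPathTo z γ) (hl : γ.length - 1 < γ.length) :
    γ.get ⟨γ.length - 1, hl⟩ = z := by
  have := h.2.1
  rw [List.getLast?_eq_getLast (path_ne_nil h)] at this
  have h2 := Option.some.inj this
  rw [List.getLast_eq_getElem] at h2
  simpa [List.get_eq_getElem] using h2

lemma path_sum {z γ} (h : IsPathTo z γ) :
    ∀ i (hi : i < γ.length), (γ.get ⟨i, hi⟩).1 + (γ.get ⟨i, hi⟩).2 = (i : ℤ) := by
  intro i
  induction i with
  | zero => intro hi; rw [path_get_zero h hi]; simp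
  | succ n ih =>
    intro hi
    have hn : n < γ.length := Nat.lt_of_succ_lt hi
    have hstep := List.isChain_iff_getElem.mp h.2.2 n (by omega)
    have := isStep_sum hstep
    simp only [List.get_eq_getElem] at ih ⊢
    rw [this, ih hn]
    push_cast; ring

lemma path_mono {z γ} (h : IsPathTo z γ) :
    ∀ i j (hi : i < γ.length) (hj : j < γ.length), i ≤ j →
      (γ.get ⟨i, hi⟩).1 ≤ (γ.get ⟨j, hj⟩).1 ∧ (γ.get ⟨i, hi⟩).2 ≤ (γ.get ⟨j, hj⟩).2 := by
  intro i j hi hj hij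
  induction j with
  | zero =>
    have : i = 0 := by omega
    subst this; exact ⟨le_refl _, le_refl _⟩
  | succ n ih =>
    rcases Nat.lt_or_ge i (n+1) with hlt | hge
    · have hn : n < γ.length := Nat.lt_of_succ_lt hj
      have hstep := List.isChain_iff_getElem.mp h.2.2 n (by omega)
      have hle := isStep_le hstep
      have := ih hn (by omega)
      exact ⟨this.1.trans hle.1, this.2.trans hle.2⟩
    · have : i = n+1 := by omega
      subst this; exact ⟨le_refl _, le_refl _⟩

lemma path_length {z γ} (h : IsPathTo z γ) : (γ.length : ℤ) = z.1 + z.2 + 1 := by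
  have hne := path_ne_nil h
  have hl : γ.length - 1 < γ.length := by
    have := List.length_pos_iff.mpr hne; omega
  have h1 := path_sum h (γ.length - 1) hl
  rw [path_get_last h hl] at h1
  have := List.length_pos_iff.mpr hne
  omega

lemma path_sites_between {z γ} (h : IsPathTo z γ) {s : Site} (hs : s ∈ γ) :
    0 ≤ s.1 ∧ 0 ≤ s.2 ∧ s.1 ≤ z.1 ∧ s.2 ≤ z.2 := by
  obtain ⟨⟨i, hi⟩, rfl⟩ := List.mem_iff_get.mp hs
  have hne := path_ne_nil h
  have hl : γ.length - 1 < γ.length := by have := List.length_pos_iff.mpr hne; omega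
  have h0 : 0 < γ.length := List.length_pos_iff.mpr hne
  have hlow := path_mono h 0 i h0 hi (by omega)
  rw [path_get_zero h h0] at hlow
  have hhigh := path_mono h i (γ.length - 1) hi hl (by omega)
  rw [path_get_last h hl] at hhigh
  exact ⟨by simpa using hlow.1, by simpa using hlow.2, hhigh.1, hhigh.2⟩

lemma path_nodup {z γ} (h : IsPathTo z γ) : γ.Nodup := by
  rw [List.nodup_iff_injective_get]
  intro ⟨i, hi⟩ ⟨j, hj⟩ hij
  have h1 := path_sum h i hi
  have h2 := path_sum h j hj
  rw [hij] at h1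
  have : (i : ℤ) = j := by rw [← h1, h2]
  exact Fin.ext (by exact_mod_cast this)

/-! ### New in part 2 -/

lemma mem_path_zero {z γ} (h : IsPathTo z γ) : ((0,0) : Site) ∈ γ := by
  have h0 : 0 < γ.length := List.length_pos_iff.mpr (path_ne_nil h)
  have := path_get_zero h h0
  rw [← this]; exact List.get_mem _ _

lemma mem_path_last {z γ} (h : IsPathTo z γ) : z ∈ γ := by
  have h0 : γ.length - 1 < γ.length := by
    have := List.length_pos_iff.mpr (path_ne_nil h); omega
  have := path_get_last h h0
  rw [← this]; exact List.get_mem _ _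

/-- Lengths of two paths to the same endpoint agree. -/
lemma path_length_eq {z γ γ'} (h : IsPathTo z γ) (h' : IsPathTo z γ') :
    γ.length = γ'.length := by
  have := path_length h
  have := path_length h'
  omega

lemma plen_append (ω : Site → ℝ) (l₁ l₂ : List Site) :
    plen ω (l₁ ++ l₂) = plen ω l₁ + plen ω l₂ := by
  simp [plen]

/-- Index of a site on a path. -/
lemma mem_path_index {z γ} (h : IsPathTo z γ) {s : Site} (hs : s ∈ γ) :
    ∃ (k : ℕ) (hk : k < γ.length), γ.get ⟨k, hk⟩ = s ∧ (k : ℤ) = s.1 + s.2 := by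
  obtain ⟨⟨k, hk⟩, rfl⟩ := List.mem_iff_get.mp hs
  exact ⟨k, hk, rfl, (path_sum h k hk).symm⟩

/-- The prefix of a path is a path to the intermediate site. -/
lemma path_take {z γ} (h : IsPathTo z γ) (k : ℕ) (hk : k < γ.length) :
    IsPathTo (γ.get ⟨k, hk⟩) (γ.take (k+1)) := by
  have hlen : (γ.take (k+1)).length = k+1 := by
    rw [List.length_take]; omega
  have hne : γ.take (k+1) ≠ [] := by
    intro hc; rw [hc] at hlen; simp at hlen
  refine ⟨?_, ?_, h.2.2.take _⟩
  · rw [List.head?_eq_head hne, List.head_eq_getElem]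
    have h0 : 0 < γ.length := by omega
    have := path_get_zero h h0
    simp only [List.get_eq_getElem] at this
    rw [Option.some_inj]
    rw [List.getElem_take]
    simpa using this
  · rw [List.getLast?_eq_getLast hne, Option.some_inj, List.getLast_eq_getElem]
    have hh : (List.take (k+1) γ).length - 1 = k := by omega
    simp only [hh, List.getElem_take, List.get_eq_getElem]

/-- Splicing a path to `γ.get k` with the rest of `γ` gives a path to `z`. -/
lemma path_splice {z γ} (h : IsPathTo z γ) (k : ℕ) (hk : k < γ.length)
    {p : List Site} (hp : IsPathTo (γ.get ⟨k, hk⟩) p) :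
    IsPathTo z (p ++ γ.drop (k+1)) := by
  have hpne := path_ne_nil hp
  refine ⟨?_, ?_, ?_⟩
  · rw [List.head?_append_of_ne_nil _ hpne]
    exact hp.1
  · rcases Nat.lt_or_ge (k+1) γ.length with hlt | hge
    · have hdne : γ.drop (k+1) ≠ [] := by
        intro hc
        have := congrArg List.length hc
        simp [List.length_drop] at this; omega
      rw [List.getLast?_append_of_ne_nil _ hdne]
      rw [List.getLast?_eq_getLast hdne, Option.some_inj]
      rw [List.getLast_eq_getElem]
      have hl : γ.length - 1 < γ.length := by omega
      have hz := path_get_last h hl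
      simp only [List.get_eq_getElem] at hz
      rw [List.getElem_drop]
      have hidx : k + 1 + ((γ.drop (k+1)).length - 1) = γ.length - 1 := by
        rw [List.length_drop]; omega
      simp_rw [hidx]
      exact hz
    · have hdnil : γ.drop (k+1) = [] := by
        apply List.drop_eq_nil_of_le; omega
      rw [hdnil, List.append_nil]
      have hkeq : k = γ.length - 1 := by omega
      have hl : γ.length - 1 < γ.length := by omega
      have : γ.get ⟨k, hk⟩ = z := by
        subst hkeq; exact path_get_last h hl
      rw [← this]; exact hp.2.1
  · show List.IsChain _ _
    rw [List.isChain_append]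
    refine ⟨hp.2.2, h.2.2.drop _, ?_⟩
    intro x hx y hy
    rcases Nat.lt_or_ge (k+1) γ.length with hlt | hge
    · have hdne : γ.drop (k+1) ≠ [] := by
        intro hc
        have := congrArg List.length hc
        simp [List.length_drop] at this; omega
      rw [hp.2.1] at hx
      rw [List.head?_eq_head hdne] at hy
      have hx' := Option.some.inj hx
      have hy' := Option.some.inj hy
      subst hx'
      rw [List.head_eq_getElem, List.getElem_drop] at hy'
      have hstep := List.isChain_iff_getElem.mp h.2.2 k (by omega)
      have hyy : y = γ[k+1]'(by omega) := by simpa using hy'.symm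
      rw [hyy]
      simpa [List.get_eq_getElem] using hstep
    · have hdnil : γ.drop (k+1) = [] := by
        apply List.drop_eq_nil_of_le; omega
      rw [hdnil] at hy; simp at hy


lemma plen_take_drop (ω : Site → ℝ) (γ : List Site) (n : ℕ) :
    plen ω γ = plen ω (γ.take n) + plen ω (γ.drop n) := by
  rw [← plen_append, List.take_append_drop]

/-- The prefix of an optimal path is optimal. -/
lemma isOptimal_take {ω z γ} (h : IsOptimal ω z γ) (k : ℕ) (hk : k < γ.length) :
    IsOptimal ω (γ.get ⟨k, hk⟩) (γ.take (k+1)) := by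
  refine ⟨path_take h.1 k hk, ?_⟩
  intro p hp
  have hle := h.2 _ (path_splice h.1 k hk hp)
  rw [plen_append] at hle
  have hdecomp := plen_take_drop ω γ (k+1)
  linarith

lemma lowOptimal_unique {ω z γ γ'} (h : IsLowOptimal ω z γ) (h' : IsLowOptimal ω z γ') :
    γ = γ' := by
  have hlen := path_length_eq h.1.1 h'.1.1
  apply List.ext_get hlen
  intro i hi hi'
  have hb1 := h.2 γ' h'.1 i hi hi'
  have hb2 := h'.2 γ h.1 i hi' hi
  have hs1 := path_sum h.1.1 i hi
  have hs2 := path_sum h'.1.1 i hi'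
  have h2 : (γ.get ⟨i,hi⟩).2 = (γ'.get ⟨i,hi'⟩).2 := le_antisymm hb1 hb2
  have h1 : (γ.get ⟨i,hi⟩).1 = (γ'.get ⟨i,hi'⟩).1 := by omega
  exact Prod.ext h1 h2

lemma lowOpt_eq {ω z γ} (h : IsLowOptimal ω z γ) : lowOpt ω z = γ := by
  have hex : ∃ γ : List Site, IsLowOptimal ω z γ := ⟨γ, h⟩
  rw [lowOpt, dif_pos hex]
  exact lowOptimal_unique hex.choose_spec h

lemma mem_lowOpt_iff {ω : Site → ℝ} {z x : Site} :
    x ∈ lowOpt ω z ↔ ∃ γ, IsLowOptimal ω z γ ∧ x ∈ γ := by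
  constructor
  · intro hx
    by_cases hex : ∃ γ : List Site, IsLowOptimal ω z γ
    · refine ⟨hex.choose, hex.choose_spec, ?_⟩
      rwa [lowOpt, dif_pos hex] at hx
    · rw [lowOpt, dif_neg hex] at hx; simp at hx
  · rintro ⟨γ, hγ, hxγ⟩; rw [lowOpt_eq hγ]; exact hxγ

/-- The prefix of a low-optimal path is low-optimal. -/
lemma isLowOptimal_take {ω z γ} (h : IsLowOptimal ω z γ) (k : ℕ) (hk : k < γ.length) :
    IsLowOptimal ω (γ.get ⟨k, hk⟩) (γ.take (k+1)) := by
  refine ⟨isOptimal_take h.1 k hk, ?_⟩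
  intro q hq
  have hsplice : IsPathTo z (q ++ γ.drop (k+1)) := path_splice h.1.1 k hk hq.1
  have hdecomp := plen_take_drop ω γ (k+1)
  have hopt : IsOptimal ω z (q ++ γ.drop (k+1)) := by
    refine ⟨hsplice, ?_⟩
    intro p hp
    have h1 := h.1.2 p hp
    rw [plen_append]
    have htq : plen ω (γ.take (k+1)) ≤ plen ω q := hq.2 _ (path_take h.1.1 k hk)
    linarith
  have hbel := h.2 _ hopt
  intro i hi hi'
  have hlen_take : (γ.take (k+1)).length = k+1 := by rw [List.length_take]; omega
  have hqlen : q.length = k+1 := by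
    have hl1 := path_length hq.1
    have hl2 := path_length (path_take h.1.1 k hk)
    rw [hlen_take] at hl2
    omega
  have hi2 : i < γ.length := by rw [hlen_take] at hi; omega
  have hi3 : i < (q ++ γ.drop (k+1)).length := by
    rw [List.length_append, hqlen]; rw [hlen_take] at hi; omega
  have hb := hbel i hi2 hi3
  have hgl : (q ++ γ.drop (k+1)).get ⟨i, hi3⟩ = q.get ⟨i, hi'⟩ := by
    simp only [List.get_eq_getElem]
    exact List.getElem_append_left (by omega)
  have hgt : (γ.take (k+1)).get ⟨i, hi⟩ = γ.get ⟨i, hi2⟩ := by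
    simp only [List.get_eq_getElem, List.getElem_take]
  rw [hgt]; rw [hgl] at hb; exact hb

lemma isStep_add {a x y : Site} (h : IsStep x y) : IsStep (x + a) (y + a) := by
  rcases h with h | h <;> [left; right] <;> subst h <;> abel

lemma isStep_sub {a x y : Site} (h : IsStep x y) : IsStep (x - a) (y - a) := by
  have := isStep_add (a := -a) h
  simpa [sub_eq_add_neg] using this

lemma isStep_sub_iff {a x y : Site} : IsStep (x - a) (y - a) ↔ IsStep x y := by
  constructor
  · intro h
    have := isStep_add (a := a) h
    simpa using this
  · exact isStep_sub

lemma plen_map_sub (ω : Site → ℝ) (a : Site) (l : List Site) :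
    plen (fun s => ω (a + s)) (l.map (fun s => s - a)) = plen ω l := by
  have hc : ((fun s => ω (a + s)) ∘ (fun s : Site => s - a)) = ω := by
    funext s; simp only [Function.comp_apply]; congr 1; abel
  simp only [plen, List.map_map, hc]

lemma plen_map_add (ω : Site → ℝ) (a : Site) (l : List Site) :
    plen ω (l.map (fun s => a + s)) = plen (fun s => ω (a + s)) l := by
  simp only [plen, List.map_map]
  rfl

/-- The suffix of a low-optimal path, from a site `a` on, translated by `-a`, is the
low-optimal path in the translated environment. -/
lemma isLowOptimal_shift {ω : Site → ℝ} {v : Site} {γ : List Site}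
    (h : IsLowOptimal ω v γ) {k : ℕ} (hk : k < γ.length)
    {a : Site} (hka : γ.get ⟨k, hk⟩ = a) :
    IsLowOptimal (fun s => ω (a + s)) (v - a) ((γ.drop k).map (fun s => s - a)) := by
  have hγ := h.1.1
  have hdlen : (γ.drop k).length = γ.length - k := List.length_drop
  have hdne : γ.drop k ≠ [] := by
    intro hc; have := congrArg List.length hc; rw [hdlen] at this; simp at this; omega
  have hdhead : (γ.drop k).head? = some a := by
    rw [List.head?_eq_head hdne, List.head_eq_getElem, Option.some_inj, List.getElem_drop]
    rw [← hka]; simp [List.get_eq_getElem]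
  have hdlast : (γ.drop k).getLast? = some v := by
    rw [List.getLast?_eq_getLast hdne, Option.some_inj, List.getLast_eq_getElem,
      List.getElem_drop]
    have hl : γ.length - 1 < γ.length := by omega
    have hz := path_get_last hγ hl
    simp only [List.get_eq_getElem] at hz
    have hidx : k + ((γ.drop k).length - 1) = γ.length - 1 := by rw [hdlen]; omega
    simp_rw [hidx]; exact hz
  -- the mapped suffix is a path to `v - a`
  have hpath : IsPathTo (v - a) ((γ.drop k).map (fun s => s - a)) := by
    refine ⟨?_, ?_, ?_⟩
    · rw [List.head?_map, hdhead]; simp; rfl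
    · rw [List.getLast?_map, hdlast]; simp
    · show List.IsChain _ _
      rw [List.isChain_map]
      exact (h.1.1.2.2.drop k).imp (fun _ _ => isStep_sub)
  -- pulling back a path in the shifted environment and splicing
  have hpull : ∀ q' : List Site, IsPathTo (v - a) q' →
      IsPathTo v (γ.take k ++ q'.map (fun s => a + s)) ∧
      plen ω (γ.take k ++ q'.map (fun s => a + s)) =
        plen ω (γ.take k) + plen (fun s => ω (a + s)) q' := by
    intro q' hq'
    have hq'ne := path_ne_nil hq'
    have hqne : q'.map (fun s => a + s) ≠ [] := by simpa using hq'ne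
    have hqhead : (q'.map (fun s => a + s)).head? = some a := by
      rw [List.head?_map, hq'.1]; simp
    have hqlast : (q'.map (fun s => a + s)).getLast? = some v := by
      rw [List.getLast?_map, hq'.2.1]; simp
    constructor
    · refine ⟨?_, ?_, ?_⟩
      · rcases Nat.eq_zero_or_pos k with rfl | hkpos
        · simp only [List.take_zero, List.nil_append]
          have h00 : a = ((0,0) : Site) := by
            rw [← hka]; exact path_get_zero hγ hk
          rw [hqhead, h00]
        · have htlen : (γ.take k).length = k := by rw [List.length_take]; omega
          have htne : γ.take k ≠ [] := by
            intro hc; rw [hc] at htlen; simp at htlen; omega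
          rw [List.head?_append_of_ne_nil _ htne]
          rw [List.head?_eq_head htne, List.head_eq_getElem, Option.some_inj,
            List.getElem_take]
          have h0 : 0 < γ.length := by omega
          have := path_get_zero hγ h0
          simpa [List.get_eq_getElem] using this
      · rw [List.getLast?_append_of_ne_nil _ hqne]; exact hqlast
      · show List.IsChain _ _
        rw [List.isChain_append]
        refine ⟨hγ.2.2.take k, ?_, ?_⟩
        · show List.IsChain _ _
          rw [List.isChain_map]
          exact hq'.2.2.imp (fun x y hxy => by
            simpa [add_comm] using isStep_add (a := a) hxy)
        · intro x hx y hy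
          rcases Nat.eq_zero_or_pos k with rfl | hkpos
          · simp at hx
          · have htlen : (γ.take k).length = k := by rw [List.length_take]; omega
            have htne : γ.take k ≠ [] := by
              intro hc; rw [hc] at htlen; simp at htlen; omega
            rw [List.getLast?_eq_getLast htne] at hx
            have hx' := Option.some.inj hx
            rw [List.getLast_eq_getElem, List.getElem_take] at hx'
            have hlt : (γ.take k).length - 1 = k - 1 := by simp [List.length_take]; omega
            rw [hqhead] at hy
            have hy' := Option.some.inj hy
            have hstep := List.isChain_iff_getElem.mp hγ.2.2 (k-1) (by omega)
            subst hy'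
            rw [← hx']
            rw [← hka]
            simp only [List.get_eq_getElem]
            have hidx : k - 1 + 1 = k := by omega
            simp_rw [hlt, hidx] at hstep ⊢
            exact hstep
    · rw [plen_append, plen_map_add]
  -- optimality of the mapped suffix
  have hopt : IsOptimal (fun s => ω (a + s)) (v - a) ((γ.drop k).map (fun s => s - a)) := by
    refine ⟨hpath, ?_⟩
    intro q' hq'
    obtain ⟨hsp, hsplen⟩ := hpull q' hq'
    have hle := h.1.2 _ hsp
    rw [hsplen] at hle
    have hdecomp := plen_take_drop ω γ k
    have hms := plen_map_sub ω a (γ.drop k)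
    linarith
  refine ⟨hopt, ?_⟩
  intro q' hq'
  obtain ⟨hsp, hsplen⟩ := hpull q' hq'.1
  have hspopt : IsOptimal ω v (γ.take k ++ q'.map (fun s => a + s)) := by
    refine ⟨hsp, ?_⟩
    intro p hp
    have h1 := h.1.2 p hp
    have he1 : plen (fun s => ω (a + s)) ((γ.drop k).map (fun s => s - a)) ≤
        plen (fun s => ω (a + s)) q' := hq'.2 _ hpath
    
    have he2 := hopt.2 q' hq'.1
    have hms := plen_map_sub ω a (γ.drop k)
    have hdecomp := plen_take_drop ω γ k
    rw [hsplen]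
    linarith
  have hbel := h.2 _ hspopt
  intro i hi hi'
  have hmlen : ((γ.drop k).map (fun s => s - a)).length = γ.length - k := by
    rw [List.length_map, hdlen]
  have htklen : (γ.take k).length = k := by rw [List.length_take]; omega
  have hj : k + i < γ.length := by rw [hmlen] at hi; omega
  have hj' : k + i < (γ.take k ++ q'.map (fun s => a + s)).length := by
    rw [List.length_append, htklen, List.length_map]; omega
  have hb := hbel (k+i) hj hj'
  have hrhs : ((γ.take k ++ q'.map (fun s => a + s)).get ⟨k+i, hj'⟩) =
      a + q'.get ⟨i, hi'⟩ := by
    simp only [List.get_eq_getElem]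
    rw [List.getElem_append_right (by omega)]
    have hidx : k + i - (γ.take k).length = i := by omega
    simp_rw [hidx, List.getElem_map]
  have hlhs : (((γ.drop k).map (fun s => s - a)).get ⟨i, hi⟩) =
      γ.get ⟨k+i, hj⟩ - a := by
    simp only [List.get_eq_getElem, List.getElem_map, List.getElem_drop]
  rw [hrhs] at hb
  rw [hlhs]
  simp only [Prod.snd_sub, Prod.snd_add] at hb ⊢
  omega

end LPPAux

namespace LPPAux

lemma one_one_mem_posQuad : ((1,1) : Site) ∈ posQuad := by
  constructor <;> norm_num

/-- Main deterministic lemma: on `Ω^a`, every vertex of `T_{a+(1,1)}^ω` shifted by `-a`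
is a vertex of `T_{(1,1)}^{τ_a ω}`. -/
lemma shift_mem_treeV {a : Site} (ha : a ∈ posQuad) (ω : CfgNN) (hΩ : ω ∈ OmegaSup a)
    {v : Site} (hv : v ∈ treeV (toCfg ω) (a + (1,1))) :
    (v - a) ∈ treeV (toCfg (shift a ω)) ((1,1) : Site) := by
  obtain ⟨hvq, hvmem⟩ := hv
  obtain ⟨γ, hγlow, hγmem⟩ := mem_lowOpt_iff.mp hvmem
  have hγ := hγlow.1.1
  obtain ⟨k, hk, hgk, hkval⟩ := mem_path_index hγ hγmem
  have ha1 : (a + ((1,1) : Site)).1 = a.1 + 1 := by simp [Prod.fst_add]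
  have ha2 : (a + ((1,1) : Site)).2 = a.2 + 1 := by simp [Prod.snd_add]
  have hk2 : (k : ℤ) = a.1 + a.2 + 2 := by rw [hkval, ha1, ha2]; ring
  have hkpos : 1 ≤ k := by
    have hA1 : (0:ℤ) ≤ a.1 := ha.1
    have hA2 : (0:ℤ) ≤ a.2 := ha.2
    omega
  have hk1 : k - 1 < γ.length := by omega
  -- the predecessor of a+(1,1) on γ
  have hstep := List.isChain_iff_getElem.mp hγ.2.2 (k-1) (by omega)
  have hidx : k - 1 + 1 = k := by omega
  set u := γ.get ⟨k-1, hk1⟩ with hu_def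
  have hstep' : IsStep u (a + (1,1)) := by
    rw [← hgk]
    convert hstep using 3
    · rfl
    · simp only [List.get_eq_getElem, hidx]
  -- the prefix up to the predecessor is the low-optimal path to u, which contains a
  have hpre : IsLowOptimal (toCfg ω) u (γ.take k) := by
    have := isLowOptimal_take hγlow (k-1) hk1
    rwa [hidx] at this
  have hau : a ∈ γ.take k := by
    rcases hstep' with hst | hst
    · have hu : u = a + (0,1) := by
        have h1 := congrArg Prod.fst hst
        have h2 := congrArg Prod.snd hst
        simp only [Prod.fst_add, Prod.snd_add] at h1 h2
        apply Prod.ext <;> simp only [Prod.fst_add, Prod.snd_add] <;> omega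
      have : a ∈ lowOpt (toCfg ω) u := by rw [hu]; exact hΩ.2
      rwa [lowOpt_eq hpre] at this
    · have hu : u = a + (1,0) := by
        have h1 := congrArg Prod.fst hst
        have h2 := congrArg Prod.snd hst
        simp only [Prod.fst_add, Prod.snd_add] at h1 h2
        apply Prod.ext <;> simp only [Prod.fst_add, Prod.snd_add] <;> omega
      have : a ∈ lowOpt (toCfg ω) u := by rw [hu]; exact hΩ.1
      rwa [lowOpt_eq hpre] at this
  have haγ : a ∈ γ := List.mem_of_mem_take hau
  obtain ⟨j, hj, hgj, hjval⟩ := mem_path_index hγ haγ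
  -- shift the suffix from a
  have hshift := isLowOptimal_shift hγlow hj hgj
  have hshift' : IsLowOptimal (toCfg (shift a ω)) (v - a)
      ((γ.drop j).map (fun s => s - a)) := hshift
  constructor
  · -- v - a ∈ posQuad
    have hlast : γ.length - 1 < γ.length := by omega
    have hmono := path_mono hγ j (γ.length - 1) hj hlast (by omega)
    rw [path_get_last hγ hlast, hgj] at hmono
    exact ⟨by simp only [Prod.fst_sub]; omega, by simp only [Prod.snd_sub]; omega⟩
  · -- (1,1) ∈ lowOpt (shifted) (v - a)
    rw [lowOpt_eq hshift']
    have hjk : j < k := by omega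
    have hbound : k - j < (γ.drop j).length := by rw [List.length_drop]; omega
    refine List.mem_map.mpr ⟨(γ.drop j)[k - j]'hbound, List.getElem_mem _, ?_⟩
    rw [List.getElem_drop]
    have hidx2 : j + (k - j) = k := by omega
    simp_rw [hidx2]
    have : γ[k]'hk = a + (1,1) := by
      rw [← hgk]; simp [List.get_eq_getElem]
    rw [this]
    abel

/-- On `Ω^a`, membership of `T_{a+(1,1)}^ω` in `A` forces membership of
`T_{(1,1)}^{τ_a ω}` in `A`. -/
lemma key_incl {a : Site} (ha : a ∈ posQuad) {A : Set LPPTree} (hA : GrowthProperty A)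
    {ω : CfgNN} (hΩ : ω ∈ OmegaSup a)
    (hT : subtree (toCfg ω) (a + (1,1)) ∈ A) :
    subtree (toCfg (shift a ω)) ((1,1) : Site) ∈ A := by
  apply hA _ hT
  · exact ⟨toCfg (shift a ω), (1,1), fun s => (shift a ω s).coe_nonneg,
      one_one_mem_posQuad, rfl⟩
  · rintro x ⟨v, hv, rfl⟩
    have h1 := shift_mem_treeV ha ω hΩ hv
    refine ⟨v - a, h1, ?_⟩
    show (v - a) - ((1,1) : Site) = v - (a + (1,1))
    abel

end LPPAux

namespace LPPAux

open MeasurableSpace MeasureTheory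

/-! ### Measurability -/

lemma measurable_shift (a : Site) : Measurable (shift a) := by
  apply measurable_pi_iff.mpr
  intro z
  exact measurable_pi_apply (a + z)

lemma measurable_plen (γ : List Site) :
    Measurable (fun ω : CfgNN => plen (toCfg ω) γ) := by
  induction γ with
  | nil => simpa [plen] using measurable_const
  | cons x l ih =>
    have hh : (fun ω : CfgNN => plen (toCfg ω) (x :: l)) =
        fun ω => ((ω x : ℝ)) + plen (toCfg ω) l := by
      funext ω; simp [plen, toCfg]
    rw [hh]
    exact ((measurable_pi_apply x).coe_nnreal_real).add ih

lemma measurableSet_isOptimal (z : Site) (γ : List Site) :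
    MeasurableSet {ω : CfgNN | IsOptimal (toCfg ω) z γ} := by
  have hh : {ω : CfgNN | IsOptimal (toCfg ω) z γ} =
      {ω : CfgNN | IsPathTo z γ} ∩
        ⋂ γ' : List Site, {ω : CfgNN | IsPathTo z γ' →
          plen (toCfg ω) γ' ≤ plen (toCfg ω) γ} := by
    ext ω; simp [IsOptimal, Set.mem_iInter]
  rw [hh]
  refine MeasurableSet.inter (MeasurableSet.const _) ?_
  refine MeasurableSet.iInter fun γ' => ?_
  by_cases hp : IsPathTo z γ'
  · have : {ω : CfgNN | IsPathTo z γ' → plen (toCfg ω) γ' ≤ plen (toCfg ω) γ} =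
        {ω : CfgNN | plen (toCfg ω) γ' ≤ plen (toCfg ω) γ} := by
      ext ω; simp [hp]
    rw [this]
    exact measurableSet_le (measurable_plen γ') (measurable_plen γ)
  · have : {ω : CfgNN | IsPathTo z γ' → plen (toCfg ω) γ' ≤ plen (toCfg ω) γ} =
        Set.univ := by
      ext ω; simp [hp]
    rw [this]; exact MeasurableSet.univ

lemma measurableSet_isLowOptimal (z : Site) (γ : List Site) :
    MeasurableSet {ω : CfgNN | IsLowOptimal (toCfg ω) z γ} := by
  have hh : {ω : CfgNN | IsLowOptimal (toCfg ω) z γ} =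
      {ω : CfgNN | IsOptimal (toCfg ω) z γ} ∩
        ⋂ γ' : List Site, {ω : CfgNN | IsOptimal (toCfg ω) z γ' → Below γ γ'} := by
    ext ω; simp [IsLowOptimal, Set.mem_iInter]
  rw [hh]
  refine (measurableSet_isOptimal z γ).inter ?_
  refine MeasurableSet.iInter fun γ' => ?_
  by_cases hb : Below γ γ'
  · have : {ω : CfgNN | IsOptimal (toCfg ω) z γ' → Below γ γ'} = Set.univ := by
      ext ω; simp [hb]
    rw [this]; exact MeasurableSet.univ
  · have : {ω : CfgNN | IsOptimal (toCfg ω) z γ' → Below γ γ'} =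
        {ω : CfgNN | IsOptimal (toCfg ω) z γ'}ᶜ := by
      ext ω; simp [hb]
    rw [this]; exact (measurableSet_isOptimal z γ').compl

lemma measurableSet_mem_lowOpt (x z : Site) :
    MeasurableSet {ω : CfgNN | x ∈ lowOpt (toCfg ω) z} := by
  have hh : {ω : CfgNN | x ∈ lowOpt (toCfg ω) z} =
      ⋃ γ : List Site, ({ω : CfgNN | IsLowOptimal (toCfg ω) z γ} ∩ {ω : CfgNN | x ∈ γ}) := by
    ext ω
    rw [Set.mem_setOf_eq, mem_lowOpt_iff]
    simp only [Set.mem_iUnion, Set.mem_inter_iff, Set.mem_setOf_eq]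
  rw [hh]
  refine MeasurableSet.iUnion fun γ => ?_
  exact (measurableSet_isLowOptimal z γ).inter (MeasurableSet.const _)

lemma measurableSet_omegaSup (a : Site) : MeasurableSet (OmegaSup a) := by
  have hh : OmegaSup a = {ω : CfgNN | a ∈ lowOpt (toCfg ω) (a + (1,0))} ∩
      {ω : CfgNN | a ∈ lowOpt (toCfg ω) (a + (0,1))} := rfl
  rw [hh]
  exact (measurableSet_mem_lowOpt _ _).inter (measurableSet_mem_lowOpt _ _)

/-! ### Cylinders -/

/-- Finite cylinder events over coordinates contained in `S`. -/
def Cyl (S : Set Site) : Set (Set CfgNN) :=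
  {C | ∃ (s : Finset Site) (t : Site → Set ℝ≥0), ↑s ⊆ S ∧ (∀ z ∈ s, MeasurableSet (t z)) ∧
    C = {ω : CfgNN | ∀ z ∈ s, ω z ∈ t z}}

lemma isPiSystem_Cyl (S : Set Site) : IsPiSystem (Cyl S) := by
  rintro C1 ⟨s1, t1, hs1, ht1, rfl⟩ C2 ⟨s2, t2, hs2, ht2, rfl⟩ -
  classical
  refine ⟨s1 ∪ s2, fun z =>
    (if z ∈ s1 then t1 z else Set.univ) ∩ (if z ∈ s2 then t2 z else Set.univ), ?_, ?_, ?_⟩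
  · intro z hz
    rcases Finset.mem_union.mp (by exact_mod_cast hz) with h | h
    · exact hs1 (by exact_mod_cast h)
    · exact hs2 (by exact_mod_cast h)
  · intro z hz
    refine MeasurableSet.inter ?_ ?_ <;> split_ifs with h
    · exact ht1 z h
    · exact MeasurableSet.univ
    · exact ht2 z h
    · exact MeasurableSet.univ
  · ext ω
    simp only [Set.mem_inter_iff, Set.mem_setOf_eq, Finset.mem_union]
    constructor
    · rintro ⟨h1, h2⟩ z hz
      constructor <;> split_ifs with h
      · exact h1 z h
      · trivial
      · exact h2 z h
      · trivial
    · intro h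
      constructor <;> intro z hz
      · have := (h z (Or.inl hz)).1; rwa [if_pos hz] at this
      · have := (h z (Or.inr hz)).2; rwa [if_pos hz] at this

lemma cyl_measurableSet {S : Set Site} {C : Set CfgNN} (h : C ∈ Cyl S) :
    MeasurableSet C := by
  obtain ⟨s, t, -, ht, rfl⟩ := h
  have hh : {ω : CfgNN | ∀ z ∈ s, ω z ∈ t z} = ⋂ z ∈ s, {ω : CfgNN | ω z ∈ t z} := by
    ext; simp
  rw [hh]
  exact MeasurableSet.biInter s.countable_toSet fun z hz =>
    (measurable_pi_apply z) (ht z hz)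

lemma gen_Cyl_le (S : Set Site) :
    MeasurableSpace.generateFrom (Cyl S) ≤ (inferInstance : MeasurableSpace CfgNN) :=
  MeasurableSpace.generateFrom_le fun _ hC => cyl_measurableSet hC

/-- A measurable set that depends only on coordinates in `S` is measurable for the
σ-algebra generated by cylinders over `S`. -/
lemma mem_generateFrom_Cyl {S : Set Site} {G : Set CfgNN} (hG : MeasurableSet G)
    (hdep : ∀ ω ω' : CfgNN, (∀ z ∈ S, ω z = ω' z) → (ω ∈ G ↔ ω' ∈ G)) :
    MeasurableSet[MeasurableSpace.generateFrom (Cyl S)] G := by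
  classical
  let π : CfgNN → (S → ℝ≥0) := fun ω z => ω z
  let ext : (S → ℝ≥0) → CfgNN := fun f z => if h : z ∈ S then f ⟨z, h⟩ else 0
  have hπ : Measurable[MeasurableSpace.generateFrom (Cyl S)] π := by
    apply (@measurable_pi_iff CfgNN S (fun _ => ℝ≥0)
      (MeasurableSpace.generateFrom (Cyl S)) _ π).mpr
    intro z
    intro B hB
    have hh : (fun ω : CfgNN => ω (z : Site)) ⁻¹' B =
        {ω : CfgNN | ∀ w ∈ ({(z : Site)} : Finset Site), ω w ∈ B} := by
      ext; simp
    rw [hh]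
    exact measurableSet_generateFrom
      ⟨{(z : Site)}, fun _ => B, by simpa using z.2, fun _ _ => hB, rfl⟩
  have hext : Measurable ext := by
    apply measurable_pi_iff.mpr
    intro z
    by_cases h : z ∈ S
    · simp only [ext, dif_pos h]
      exact measurable_pi_apply _
    · simp only [ext, dif_neg h]
      exact measurable_const
  have hGe : G = π ⁻¹' (ext ⁻¹' G) := by
    ext ω
    simp only [Set.mem_preimage]
    exact hdep ω (ext (π ω)) (fun z hz => by simp [ext, π, dif_pos hz])
  rw [hGe]
  exact hπ (hext hG)

lemma pi_eq_gen_Cyl :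
    (inferInstance : MeasurableSpace CfgNN) = MeasurableSpace.generateFrom (Cyl Set.univ) := by
  apply le_antisymm
  · intro s hs
    refine mem_generateFrom_Cyl hs (fun ω ω' hh => ?_)
    have : ω = ω' := funext fun z => hh z trivial
    rw [this]
  · exact gen_Cyl_le _

/-! ### Dependence lemmas -/

lemma plen_diff {z : Site} {γ : List Site} (h : IsPathTo z γ) {p : Site} (hp : p ∈ γ)
    {ω ω' : Site → ℝ} (hoff : ∀ s ∈ γ, s ≠ p → ω' s = ω s) :
    plen ω' γ = plen ω γ + (ω' p - ω p) := by
  classical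
  have hnd := path_nodup h
  rw [plen, plen, ← List.sum_toFinset _ hnd, ← List.sum_toFinset _ hnd]
  have hc : ∀ s ∈ γ.toFinset, ω' s = ω s + (if s = p then ω' p - ω p else 0) := by
    intro s hs
    by_cases hsp : s = p
    · subst hsp; simp
    · rw [hoff s (List.mem_toFinset.mp hs) hsp, if_neg hsp, add_zero]
  rw [Finset.sum_congr rfl hc, Finset.sum_add_distrib,
    Finset.sum_ite_eq' _ p, if_pos (List.mem_toFinset.mpr hp)]

lemma lowOpt_congr {z : Site} {ω ω' : Site → ℝ} (c : ℝ)
    (h : ∀ γ, IsPathTo z γ → plen ω' γ = plen ω γ + c) :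
    lowOpt ω' z = lowOpt ω z := by
  have hopt : ∀ γ, IsOptimal ω' z γ ↔ IsOptimal ω z γ := by
    intro γ
    constructor <;> rintro ⟨hp, hmax⟩ <;> refine ⟨hp, fun γ' hγ' => ?_⟩
    · have := hmax γ' hγ'; rw [h γ hp, h γ' hγ'] at this; linarith
    · have := hmax γ' hγ'; rw [h γ hp, h γ' hγ']; linarith
  have hlow : ∀ γ, IsLowOptimal ω' z γ ↔ IsLowOptimal ω z γ := by
    intro γ
    unfold IsLowOptimal
    rw [hopt γ]
    constructor <;> rintro ⟨h1, h2⟩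
    · exact ⟨h1, fun γ' hγ' => h2 γ' ((hopt γ').mpr hγ')⟩
    · exact ⟨h1, fun γ' hγ' => h2 γ' ((hopt γ').mp hγ')⟩
  by_cases hex : ∃ γ, IsLowOptimal ω z γ
  · obtain ⟨γ, hγ⟩ := hex
    rw [lowOpt_eq hγ, lowOpt_eq ((hlow γ).mpr hγ)]
  · have hex' : ¬ ∃ γ, IsLowOptimal ω' z γ :=
      fun ⟨γ, hγ⟩ => hex ⟨γ, (hlow γ).mp hγ⟩
    rw [lowOpt, lowOpt, dif_neg hex, dif_neg hex']

/-- Sites determining the event `Ω^a`. -/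
def S1 (a : Site) : Set Site :=
  {w | ((0 ≤ w.1 ∧ w.1 ≤ a.1 + 1 ∧ 0 ≤ w.2 ∧ w.2 ≤ a.2) ∨
        (0 ≤ w.1 ∧ w.1 ≤ a.1 ∧ 0 ≤ w.2 ∧ w.2 ≤ a.2 + 1)) ∧
      w ≠ a + (1,0) ∧ w ≠ a + (0,1)}

/-- Sites determining the event `{τ_a ω : T_{(1,1)} ∈ A}`. -/
def S2 (a : Site) : Set Site := {w | a.1 ≤ w.1 ∧ a.2 ≤ w.2 ∧ w ≠ a}

lemma S1_S2_disjoint (a : Site) : ∀ z, z ∈ S1 a → z ∈ S2 a → False := by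
  rintro z ⟨hrect, hne1, hne2⟩ ⟨hge1, hge2, hnea⟩
  rcases hrect with ⟨h1, h2, h3, h4⟩ | ⟨h1, h2, h3, h4⟩
  · apply hne1
    have hz2 : z.2 = a.2 := le_antisymm h4 hge2
    have hz1 : z.1 = a.1 ∨ z.1 = a.1 + 1 := by omega
    rcases hz1 with hz1 | hz1
    · exact absurd (Prod.ext hz1 hz2) hnea
    · apply Prod.ext <;> simp only [Prod.fst_add, Prod.snd_add] <;> omega
  · apply hne2
    have hz1 : z.1 = a.1 := le_antisymm h2 hge1
    have hz2 : z.2 = a.2 ∨ z.2 = a.2 + 1 := by omega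
    rcases hz2 with hz2 | hz2
    · exact absurd (Prod.ext hz1 hz2) hnea
    · apply Prod.ext <;> simp only [Prod.fst_add, Prod.snd_add] <;> omega

lemma omegaSup_dep {a : Site} (ω ω' : CfgNN) (hagree : ∀ z ∈ S1 a, ω z = ω' z) :
    ω ∈ OmegaSup a ↔ ω' ∈ OmegaSup a := by
  have key : ∀ b : Site, b = a + (1,0) ∨ b = a + (0,1) →
      lowOpt (toCfg ω') b = lowOpt (toCfg ω) b := by
    intro b hb
    apply lowOpt_congr (toCfg ω' b - toCfg ω b)
    intro γ hγ
    apply plen_diff hγ (mem_path_last hγ)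
    intro s hs hsb
    have hbt := path_sites_between hγ hs
    have hS1 : s ∈ S1 a := by
      rcases hb with rfl | rfl
      · refine ⟨Or.inl ⟨hbt.1, ?_, hbt.2.1, ?_⟩, hsb, ?_⟩
        · have := hbt.2.2.1; simpa [Prod.fst_add] using this
        · have := hbt.2.2.2; simpa [Prod.snd_add] using this
        · intro hc
          have h2 := hbt.2.2.2
          rw [hc] at h2
          simp only [Prod.snd_add] at h2
          omega
      · refine ⟨Or.inr ⟨hbt.1, ?_, hbt.2.1, ?_⟩, ?_, hsb⟩
        · have := hbt.2.2.1; simpa [Prod.fst_add] using this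
        · have := hbt.2.2.2; simpa [Prod.snd_add] using this
        · intro hc
          have h2 := hbt.2.2.1
          rw [hc] at h2
          simp only [Prod.fst_add] at h2
          omega
    exact congrArg _ (hagree s hS1).symm
  constructor <;> rintro ⟨h1, h2⟩
  · exact ⟨by rw [key _ (Or.inl rfl)]; exact h1, by rw [key _ (Or.inr rfl)]; exact h2⟩
  · exact ⟨by rw [← key _ (Or.inl rfl)]; exact h1, by rw [← key _ (Or.inr rfl)]; exact h2⟩

lemma subtree_shift_dep {a : Site} (ω ω' : CfgNN) (hagree : ∀ z ∈ S2 a, ω z = ω' z) :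
    subtree (toCfg (shift a ω)) ((1,1) : Site) = subtree (toCfg (shift a ω')) ((1,1) : Site) := by
  have key : ∀ z' : Site, lowOpt (toCfg (shift a ω')) z' = lowOpt (toCfg (shift a ω)) z' := by
    intro z'
    apply lowOpt_congr (toCfg (shift a ω') ((0,0) : Site) - toCfg (shift a ω) ((0,0) : Site))
    intro γ hγ
    apply plen_diff hγ (mem_path_zero hγ)
    intro s hs hs0
    have hbt := path_sites_between hγ hs
    have hS2 : a + s ∈ S2 a := by
      refine ⟨by simp only [Prod.fst_add]; omega, by simp only [Prod.snd_add]; omega, ?_⟩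
      intro hc
      apply hs0
      have := congrArg (fun w => w - a) hc
      exact (by simpa using this : s = 0)
    show toCfg (shift a ω') s = toCfg (shift a ω) s
    simp only [toCfg, shift]
    rw [hagree _ hS2]
  unfold subtree
  congr 1
  unfold treeV
  ext z'
  rw [Set.mem_setOf_eq, Set.mem_setOf_eq, key z']

end LPPAux

namespace LPPAux

open MeasureTheory MeasurableSpace

section Measure

variable (μ : Measure ℝ≥0) [IsProbabilityMeasure μ]
variable (ℙ : Measure CfgNN) [IsProbabilityMeasure ℙ]
variable (hprod : ∀ (s : Finset Site) (t : Site → Set ℝ≥0), (∀ z ∈ s, MeasurableSet (t z)) →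
      ℙ {ω : CfgNN | ∀ z ∈ s, ω z ∈ t z} = ∏ z ∈ s, μ (t z))

include hprod

lemma indep_cyl {S1' S2' : Set Site} (hdisj : ∀ z, z ∈ S1' → z ∈ S2' → False)
    {C1 C2 : Set CfgNN} (h1 : C1 ∈ Cyl S1') (h2 : C2 ∈ Cyl S2') :
    ℙ (C1 ∩ C2) = ℙ C1 * ℙ C2 := by
  classical
  obtain ⟨s1, t1, hs1, ht1, rfl⟩ := h1
  obtain ⟨s2, t2, hs2, ht2, rfl⟩ := h2
  have hd : Disjoint s1 s2 := by
    rw [Finset.disjoint_left]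
    intro z hz1 hz2
    exact hdisj z (hs1 hz1) (hs2 hz2)
  have hset : {ω : CfgNN | ∀ z ∈ s1, ω z ∈ t1 z} ∩ {ω : CfgNN | ∀ z ∈ s2, ω z ∈ t2 z}
      = {ω : CfgNN | ∀ z ∈ s1 ∪ s2, ω z ∈ (if z ∈ s1 then t1 z else t2 z)} := by
    ext ω
    simp only [Set.mem_inter_iff, Set.mem_setOf_eq, Finset.mem_union]
    constructor
    · rintro ⟨hA, hB⟩ z hz
      rcases hz with hz | hz
      · rw [if_pos hz]; exact hA z hz
      · have hz1 : z ∉ s1 := fun hc => (Finset.disjoint_left.mp hd) hc hz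
        rw [if_neg hz1]; exact hB z hz
    · intro h
      constructor
      · intro z hz; have := h z (Or.inl hz); rwa [if_pos hz] at this
      · intro z hz
        have hz1 : z ∉ s1 := fun hc => (Finset.disjoint_left.mp hd) hc hz
        have := h z (Or.inr hz); rwa [if_neg hz1] at this
  have htm : ∀ z ∈ s1 ∪ s2, MeasurableSet (if z ∈ s1 then t1 z else t2 z) := by
    intro z hz
    split_ifs with h
    · exact ht1 z h
    · rcases Finset.mem_union.mp hz with h' | h'
      · exact absurd h' h
      · exact ht2 z h'
  rw [hset, hprod _ _ htm, Finset.prod_union hd, hprod _ _ ht1, hprod _ _ ht2]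
  congr 1
  · refine Finset.prod_congr rfl fun z hz => ?_
    rw [if_pos hz]
  · refine Finset.prod_congr rfl fun z hz => ?_
    have hz1 : z ∉ s1 := fun hc => (Finset.disjoint_left.mp hd) hc hz
    rw [if_neg hz1]

lemma indep_gen {S1' S2' : Set Site} (hdisj : ∀ z, z ∈ S1' → z ∈ S2' → False)
    {G1 G2 : Set CfgNN}
    (h1 : MeasurableSet[MeasurableSpace.generateFrom (Cyl S1')] G1)
    (h2 : MeasurableSet[MeasurableSpace.generateFrom (Cyl S2')] G2) :
    ℙ (G1 ∩ G2) = ℙ G1 * ℙ G2 := by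
  have step1 : ∀ C1 ∈ Cyl S1', ∀ ⦃G⦄, MeasurableSet[MeasurableSpace.generateFrom (Cyl S2')] G →
      ℙ (C1 ∩ G) = ℙ C1 * ℙ G := by
    intro C1 hC1
    have hC1m : MeasurableSet C1 := cyl_measurableSet hC1
    refine MeasurableSpace.induction_on_inter
      (C := fun B _ => ℙ (C1 ∩ B) = ℙ C1 * ℙ B) (s := Cyl S2')
      (m := MeasurableSpace.generateFrom (Cyl S2')) rfl (isPiSystem_Cyl _) ?_ ?_ ?_ ?_
    · simp
    · intro C2 hC2
      exact indep_cyl μ ℙ hprod hdisj hC1 hC2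
    · intro t htm ht
      have htm' : MeasurableSet t := gen_Cyl_le _ _ htm
      have hA : ℙ (C1 ∩ t) + ℙ (C1 ∩ tᶜ) = ℙ C1 := by
        rw [← Set.diff_eq]
        exact measure_inter_add_diff C1 htm'
      have hB : ℙ C1 * ℙ t + ℙ C1 * ℙ tᶜ = ℙ C1 := by
        rw [← mul_add, measure_add_measure_compl htm', measure_univ, mul_one]
      rw [ht] at hA
      have hfin : ℙ C1 * ℙ t ≠ ⊤ :=
        ENNReal.mul_ne_top (measure_ne_top _ _) (measure_ne_top _ _)
      exact (ENNReal.add_right_inj hfin).mp (hA.trans hB.symm)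
    · intro f hdf hfm hf
      have hfm' : ∀ i, MeasurableSet (f i) := fun i => gen_Cyl_le _ _ (hfm i)
      have hdf' : Pairwise (Function.onFun Disjoint fun i => C1 ∩ f i) := by
        intro i j hij
        exact ((hdf hij).mono Set.inter_subset_right Set.inter_subset_right)
      rw [Set.inter_iUnion, measure_iUnion hdf' (fun i => hC1m.inter (hfm' i))]
      simp_rw [hf]
      rw [ENNReal.tsum_mul_left, ← measure_iUnion hdf hfm']
  have hG2m : MeasurableSet G2 := gen_Cyl_le _ _ h2
  refine MeasurableSpace.induction_on_inter
    (C := fun B _ => ℙ (B ∩ G2) = ℙ B * ℙ G2) (s := Cyl S1')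
    (m := MeasurableSpace.generateFrom (Cyl S1')) rfl (isPiSystem_Cyl _) ?_ ?_ ?_ ?_ G1 h1
  · simp
  · intro C1 hC1
    exact step1 C1 hC1 h2
  · intro t htm ht
    have htm' : MeasurableSet t := gen_Cyl_le _ _ htm
    have hA : ℙ (t ∩ G2) + ℙ (tᶜ ∩ G2) = ℙ G2 := by
      rw [Set.inter_comm t, Set.inter_comm tᶜ, ← Set.diff_eq]
      exact measure_inter_add_diff G2 htm'
    have hB : ℙ t * ℙ G2 + ℙ tᶜ * ℙ G2 = ℙ G2 := by
      rw [← add_mul, measure_add_measure_compl htm', measure_univ, one_mul]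
    rw [ht] at hA
    have hfin : ℙ t * ℙ G2 ≠ ⊤ :=
      ENNReal.mul_ne_top (measure_ne_top _ _) (measure_ne_top _ _)
    exact (ENNReal.add_right_inj hfin).mp (hA.trans hB.symm)
  · intro f hdf hfm hf
    have hfm' : ∀ i, MeasurableSet (f i) := fun i => gen_Cyl_le _ _ (hfm i)
    have hdf' : Pairwise (Function.onFun Disjoint fun i => f i ∩ G2) := by
      intro i j hij
      exact ((hdf hij).mono Set.inter_subset_left Set.inter_subset_left)
    rw [Set.iUnion_inter, measure_iUnion hdf' (fun i => (hfm' i).inter hG2m)]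
    simp_rw [hf]
    rw [ENNReal.tsum_mul_right, ← measure_iUnion hdf hfm']

lemma map_shift (a : Site) : Measure.map (shift a) ℙ = ℙ := by
  refine ext_of_generate_finite (Cyl Set.univ) pi_eq_gen_Cyl (isPiSystem_Cyl _) ?_ ?_
  · intro C hC
    obtain ⟨s, t, -, ht, rfl⟩ := hC
    rw [Measure.map_apply (measurable_shift a)
      (cyl_measurableSet ⟨s, t, Set.subset_univ _, ht, rfl⟩)]
    have hpre : shift a ⁻¹' {ω : CfgNN | ∀ z ∈ s, ω z ∈ t z}
        = {ω : CfgNN | ∀ w ∈ s.image (fun z => a + z), ω w ∈ t (w - a)} := by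
      ext ω
      simp only [Set.mem_preimage, Set.mem_setOf_eq, Finset.mem_image, shift]
      constructor
      · rintro h w ⟨z, hz, rfl⟩
        have hz2 : a + z - a = z := by abel
        rw [hz2]; exact h z hz
      · intro h z hz
        have := h (a + z) ⟨z, hz, rfl⟩
        have hz2 : a + z - a = z := by abel
        rwa [hz2] at this
    have htm2 : ∀ w ∈ s.image (fun z => a + z), MeasurableSet (t (w - a)) := by
      intro w hw
      obtain ⟨z, hz, rfl⟩ := Finset.mem_image.mp hw
      have hz2 : a + z - a = z := by abel
      rw [hz2]; exact ht z hz
    rw [hpre, hprod _ _ htm2, hprod _ _ ht]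
    rw [Finset.prod_image (fun x _ y _ hxy => by exact add_left_cancel hxy)]
    refine Finset.prod_congr rfl fun z hz => ?_
    have hz2 : a + z - a = z := by abel
    rw [hz2]
  · rw [Measure.map_apply (measurable_shift a) MeasurableSet.univ]
    simp

end Measure

end LPPAux

open MeasureTheory

/-- Theorem 2, second part: if `ℙ` is the product measure `⊗_{z ∈ ℤ²} μ`, then
`ℙ(T_{a+(1,1)} ∈ A ∣ Ω^a) ≤ ℙ(T_{(1,1)} ∈ A)`. -/
theorem stochastic_domination_product (μ : Measure ℝ≥0) [IsProbabilityMeasure μ]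
    (ℙ : Measure CfgNN) [IsProbabilityMeasure ℙ]
    (hprod : ∀ (s : Finset Site) (t : Site → Set ℝ≥0), (∀ z ∈ s, MeasurableSet (t z)) →
      ℙ {ω : CfgNN | ∀ z ∈ s, ω z ∈ t z} = ∏ z ∈ s, μ (t z))
    (a : Site) (ha : a ∈ posQuad)
    (A : Set LPPTree) (hA_sub : A ⊆ TreeSet) (hA : GrowthProperty A)
    (hmeas : ∀ z ∈ posQuad, MeasurableSet {ω : CfgNN | subtree (toCfg ω) z ∈ A})
    (hpos : 0 < ℙ (OmegaSup a)) :
    ProbabilityTheory.cond ℙ (OmegaSup a)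
        {ω : CfgNN | subtree (toCfg ω) (a + (1, 1)) ∈ A}
      ≤ ℙ {ω : CfgNN | subtree (toCfg ω) ((1, 1) : Site) ∈ A} := by
  classical
  have hE1m : MeasurableSet (OmegaSup a) := LPPAux.measurableSet_omegaSup a
  have hF0m : MeasurableSet {ω : CfgNN | subtree (toCfg ω) ((1, 1) : Site) ∈ A} :=
    hmeas _ LPPAux.one_one_mem_posQuad
  set F₀ := {ω : CfgNN | subtree (toCfg ω) ((1, 1) : Site) ∈ A} with hF₀
  have hsub : OmegaSup a ∩ {ω : CfgNN | subtree (toCfg ω) (a + (1, 1)) ∈ A}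
      ⊆ OmegaSup a ∩ (shift a ⁻¹' F₀) := by
    rintro ω ⟨hΩ, hE⟩
    exact ⟨hΩ, LPPAux.key_incl ha hA hΩ hE⟩
  have hG1 : MeasurableSet[MeasurableSpace.generateFrom (LPPAux.Cyl (LPPAux.S1 a))]
      (OmegaSup a) :=
    LPPAux.mem_generateFrom_Cyl hE1m (fun ω ω' h => LPPAux.omegaSup_dep ω ω' h)
  have hG2 : MeasurableSet[MeasurableSpace.generateFrom (LPPAux.Cyl (LPPAux.S2 a))]
      (shift a ⁻¹' F₀) := by
    refine LPPAux.mem_generateFrom_Cyl ((LPPAux.measurable_shift a) hF0m) ?_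
    intro ω ω' h
    simp only [Set.mem_preimage, hF₀, Set.mem_setOf_eq]
    rw [LPPAux.subtree_shift_dep ω ω' h]
  have hindep : ℙ (OmegaSup a ∩ (shift a ⁻¹' F₀)) = ℙ (OmegaSup a) * ℙ (shift a ⁻¹' F₀) :=
    LPPAux.indep_gen μ ℙ hprod (LPPAux.S1_S2_disjoint a) hG1 hG2
  have hshiftinv : ℙ (shift a ⁻¹' F₀) = ℙ F₀ := by
    rw [← Measure.map_apply (LPPAux.measurable_shift a) hF0m,
      LPPAux.map_shift μ ℙ hprod a]
  rw [ProbabilityTheory.cond_apply hE1m]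
  calc (ℙ (OmegaSup a))⁻¹ * ℙ (OmegaSup a ∩ {ω : CfgNN | subtree (toCfg ω) (a + (1, 1)) ∈ A})
      ≤ (ℙ (OmegaSup a))⁻¹ * ℙ (OmegaSup a ∩ (shift a ⁻¹' F₀)) :=
        mul_le_mul_right (measure_mono hsub) _
    _ = (ℙ (OmegaSup a))⁻¹ * (ℙ (OmegaSup a) * ℙ F₀) := by rw [hindep, hshiftinv]
    _ = ℙ F₀ := by
        rw [← mul_assoc, ENNReal.inv_mul_cancel hpos.ne' (measure_ne_top _ _), one_mul]
end
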